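/- arXiv:1811.01189 — 3 statements merged into one kernel-verified Lean document; each statement's English description precedes it below -/
import Mathlib

section
/- Let f : ℂ → ℂ be a complex polynomial, a, b, t ∈ ℝ, and let f_t(z) = f(z) + t(a+ib)z̄ with associated real map (g₁, g₂) = (Re f_t, Im f_t) and Jacobian J = ∂(g₁,g₂)/∂(x,y). Define G₁ = ∂(g₁, J)/∂(x,y), G₂ = ∂(g₂, J)/∂(x,y), and G_t = G₁ + iG₂. Then G_t(z) = −2i·(f'(z))²·conj(f''(z)) + 2ti·(a+ib)·f''(z)·conj(f'(z)). -/
open Complex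

noncomputable section

/-- Partial derivative in the `x`-direction of a real-valued function on `ℂ`. -/
def pdxR (u : ℂ → ℝ) (w : ℂ) : ℝ := fderiv ℝ u w 1
/-- Partial derivative in the `y`-direction of a real-valued function on `ℂ`. -/
def pdyR (u : ℂ → ℝ) (w : ℂ) : ℝ := fderiv ℝ u w Complex.I

/-- Jacobian determinant `∂(u,v)/∂(x,y) = u_x v_y − u_y v_x`. -/
def jac2 (u v : ℂ → ℝ) (w : ℂ) : ℝ := pdxR u w * pdyR v w - pdyR u w * pdxR v w

/-- The linear deformation `f_t(z) = f(z) + t(a+ib)z̄`. -/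
def ft (f : Polynomial ℂ) (a b t : ℝ) (z : ℂ) : ℂ :=
  f.eval z + (t : ℂ) * (a + Complex.I * b) * (starRingEnd ℂ) z

lemma hasFDerivAt_ft (f : Polynomial ℂ) (a b t : ℝ) (w : ℂ) :
    HasFDerivAt (ft f a b t)
      (((1 : ℂ →L[ℂ] ℂ).smulRight (f.derivative.eval w)).restrictScalars ℝ
        + ((t:ℂ)*(a + Complex.I*b)) • (Complex.conjCLE.toContinuousLinearMap)) w := by
  exact ((f.hasDerivAt w).hasFDerivAt.restrictScalars ℝ).add
    ((Complex.conjCLE.toContinuousLinearMap.hasFDerivAt).const_mul _)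

lemma fderiv_re_apply (f : Polynomial ℂ) (a b t : ℝ) (z v : ℂ) :
    fderiv ℝ (fun w => (ft f a b t w).re) z v
      = (f.derivative.eval z * v + (t:ℂ)*(a + Complex.I*b) * (starRingEnd ℂ) v).re := by
  have h : HasFDerivAt (fun w => (ft f a b t w).re) _ z :=
    (Complex.reCLM.hasFDerivAt.comp z (hasFDerivAt_ft f a b t z))
  rw [h.fderiv]
  simp [mul_comm]

lemma fderiv_im_apply (f : Polynomial ℂ) (a b t : ℝ) (z v : ℂ) :
    fderiv ℝ (fun w => (ft f a b t w).im) z v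
      = (f.derivative.eval z * v + (t:ℂ)*(a + Complex.I*b) * (starRingEnd ℂ) v).im := by
  have h : HasFDerivAt (fun w => (ft f a b t w).im) _ z :=
    (Complex.imCLM.hasFDerivAt.comp z (hasFDerivAt_ft f a b t z))
  rw [h.fderiv]
  simp [mul_comm]

lemma J_eq (f : Polynomial ℂ) (a b t : ℝ) :
    (fun w => jac2 (fun w' => (ft f a b t w').re) (fun w' => (ft f a b t w').im) w)
      = fun w => Complex.normSq (f.derivative.eval w)
          - Complex.normSq ((t:ℂ)*(a + Complex.I*b)) := by
  funext w
  unfold jac2 pdxR pdyR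
  rw [fderiv_re_apply, fderiv_re_apply, fderiv_im_apply, fderiv_im_apply]
  simp [Complex.normSq_apply, Complex.add_re, Complex.add_im, Complex.mul_re, Complex.mul_im]
  ring

lemma fderiv_J_apply (f : Polynomial ℂ) (c : ℂ) (z v : ℂ) :
    fderiv ℝ (fun w => Complex.normSq (f.derivative.eval w) - Complex.normSq c) z v
      = 2 * ((f.derivative.eval z).re * (f.derivative.derivative.eval z * v).re
          + (f.derivative.eval z).im * (f.derivative.derivative.eval z * v).im) := by
  have hA : HasFDerivAt (fun w => f.derivative.eval w)
      (((1 : ℂ →L[ℂ] ℂ).smulRight (f.derivative.derivative.eval z)).restrictScalars ℝ) z :=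
    (f.derivative.hasDerivAt z).hasFDerivAt.restrictScalars ℝ
  have hre : HasFDerivAt (fun w => (f.derivative.eval w).re) _ z :=
    Complex.reCLM.hasFDerivAt.comp z hA
  have him : HasFDerivAt (fun w => (f.derivative.eval w).im) _ z :=
    Complex.imCLM.hasFDerivAt.comp z hA
  have key : (fun w => Complex.normSq (f.derivative.eval w) - Complex.normSq c)
      = fun w => ((f.derivative.eval w).re * (f.derivative.eval w).re
          + (f.derivative.eval w).im * (f.derivative.eval w).im) - Complex.normSq c := by
    funext w; simp [Complex.normSq_apply]
  rw [key]
  have h := (((hre.mul hre).add (him.mul him)).sub_const (Complex.normSq c))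
  have h' : HasFDerivAt (fun w => (f.derivative.eval w).re * (f.derivative.eval w).re
      + (f.derivative.eval w).im * (f.derivative.eval w).im - Complex.normSq c) _ z := h
  rw [h'.fderiv]
  simp [Complex.mul_re, Complex.mul_im]
  ring

theorem Gt_formula (f : Polynomial ℂ) (a b t : ℝ) (z : ℂ) :
    (jac2 (fun w => (ft f a b t w).re)
        (fun w => jac2 (fun w' => (ft f a b t w').re) (fun w' => (ft f a b t w').im) w) z : ℂ) +
      Complex.I *
        (jac2 (fun w => (ft f a b t w).im)
          (fun w => jac2 (fun w' => (ft f a b t w').re) (fun w' => (ft f a b t w').im) w) z) =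
      -2 * Complex.I * (f.derivative.eval z) ^ 2 *
          (starRingEnd ℂ) (f.derivative.derivative.eval z) +
        2 * t * Complex.I * (a + Complex.I * b) * f.derivative.derivative.eval z *
          (starRingEnd ℂ) (f.derivative.eval z) := by
  rw [show (fun w => jac2 (fun w' => (ft f a b t w').re) (fun w' => (ft f a b t w').im) w)
      = fun w => Complex.normSq (f.derivative.eval w)
          - Complex.normSq ((t:ℂ)*(a + Complex.I*b)) from J_eq f a b t]
  unfold jac2 pdxR pdyR
  rw [fderiv_re_apply, fderiv_re_apply, fderiv_im_apply, fderiv_im_apply,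
    fderiv_J_apply, fderiv_J_apply]
  set A := f.derivative.eval z
  set B := f.derivative.derivative.eval z
  apply Complex.ext <;>
    simp [Complex.add_re, Complex.add_im, Complex.mul_re, Complex.mul_im, pow_two,
      Complex.normSq_apply] <;>
    ring


end
end

section
/- Let f : ℂ → ℂ be a complex polynomial with f(0) = 0 of multiplicity k ≥ 2 at the origin (i.e., f(z) = c z^k + higher order terms with c ≠ 0). Define G₀(z) = −2i(f'(z))²·conj(f''(z)). Then the origin is an isolated zero of G₀ and the winding number of G₀/|G₀| on a sufficiently small circle around the origin equals k. -/
open Complex Real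

noncomputable section

/-- `G₀(z) = −2i(f'(z))² conj(f''(z))`. -/
def G0 (f : Polynomial ℂ) (z : ℂ) : ℂ :=
  -2 * Complex.I * (f.derivative.eval z) ^ 2 * (starRingEnd ℂ) (f.derivative.derivative.eval z)

private lemma re_pos_of_abs_sub_one_lt {w : ℂ} (hw : ‖w - 1‖ < 1) : 0 < w.re := by
  have h1 : |(w - 1).re| ≤ ‖w - 1‖ := Complex.abs_re_le_norm _
  rw [Complex.sub_re, Complex.one_re] at h1
  have := abs_lt.mp (lt_of_le_of_lt h1 hw)
  linarith [this.1]

theorem winding_of_G0 (f : Polynomial ℂ) (hf : f ≠ 0) (k : ℕ) (hk : 2 ≤ k)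
    (h0 : f.eval 0 = 0) (hmult : f.rootMultiplicity 0 = k) :
    ∃ ε₀ : ℝ, 0 < ε₀ ∧ (∀ z : ℂ, z ≠ 0 → ‖z‖ < ε₀ → G0 f z ≠ 0) ∧
      ∀ ε : ℝ, 0 < ε → ε < ε₀ →
        ∃ θ : ℝ → ℝ, Continuous θ ∧
          (∀ s : ℝ, G0 f (circleMap 0 ε s) / (‖G0 f (circleMap 0 ε s)‖ : ℂ) =
            Complex.exp (Complex.I * θ s)) ∧
          θ (2 * π) - θ 0 = 2 * π * (k : ℝ) := by
  obtain ⟨j, rfl⟩ : ∃ j, k = j + 2 := ⟨k - 2, by omega⟩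
  -- factor f = X^(j+2) * g with g 0 ≠ 0
  have hXk : (Polynomial.X : Polynomial ℂ) ^ (j + 2) ∣ f := by
    have := Polynomial.pow_rootMultiplicity_dvd f 0
    rwa [hmult, map_zero, sub_zero] at this
  obtain ⟨g, hg⟩ := hXk
  have hg0 : g.eval 0 ≠ 0 := by
    intro hge
    obtain ⟨g', hgg'⟩ := Polynomial.dvd_iff_isRoot.2 hge
    rw [map_zero, sub_zero] at hgg'
    have hnot := Polynomial.pow_rootMultiplicity_not_dvd hf 0
    rw [hmult, map_zero, sub_zero] at hnot
    exact hnot ⟨g', by rw [hg, hgg']; ring⟩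
  -- first and second derivatives
  obtain ⟨h, hdf, hh0⟩ : ∃ h : Polynomial ℂ,
      Polynomial.derivative f = Polynomial.X ^ (j + 1) * h ∧ h.eval 0 ≠ 0 := by
    refine ⟨Polynomial.C (((j : ℕ) + 2 : ℕ) : ℂ) * g
      + Polynomial.X * Polynomial.derivative g, ?_, ?_⟩
    · rw [hg, Polynomial.derivative_mul, Polynomial.derivative_X_pow,
        (by omega : j + 2 - 1 = j + 1)]
      ring
    · have : Polynomial.eval 0 (Polynomial.C (((j : ℕ) + 2 : ℕ) : ℂ) * g
          + Polynomial.X * Polynomial.derivative g) = (((j : ℕ) + 2 : ℕ) : ℂ) * g.eval 0 := by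
        simp
      rw [this]
      exact mul_ne_zero (Nat.cast_ne_zero.2 (by omega)) hg0
  obtain ⟨m, hddf, hm0⟩ : ∃ m : Polynomial ℂ,
      Polynomial.derivative (Polynomial.derivative f) = Polynomial.X ^ j * m ∧ m.eval 0 ≠ 0 := by
    refine ⟨Polynomial.C (((j : ℕ) + 1 : ℕ) : ℂ) * h
      + Polynomial.X * Polynomial.derivative h, ?_, ?_⟩
    · rw [hdf, Polynomial.derivative_mul, Polynomial.derivative_X_pow,
        (by omega : j + 1 - 1 = j)]
      ring
    · have : Polynomial.eval 0 (Polynomial.C (((j : ℕ) + 1 : ℕ) : ℂ) * h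
          + Polynomial.X * Polynomial.derivative h) = (((j : ℕ) + 1 : ℕ) : ℂ) * h.eval 0 := by
        simp
      rw [this]
      exact mul_ne_zero (Nat.cast_ne_zero.2 (by omega)) hh0
  -- the non-vanishing factor Q
  obtain ⟨Q, hQfact, hQ0, hQcont⟩ : ∃ Q : ℂ → ℂ,
      (∀ z : ℂ, G0 f z = z ^ (2 * j + 2) * ((starRingEnd ℂ) z) ^ j * Q z) ∧ Q 0 ≠ 0 ∧
      Continuous Q := by
    refine ⟨fun z => -2 * Complex.I * (h.eval z) ^ 2 * (starRingEnd ℂ) (m.eval z), ?_, ?_, ?_⟩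
    · intro z
      simp only [G0]
      rw [hddf, hdf]
      simp only [Polynomial.eval_mul, Polynomial.eval_pow, Polynomial.eval_X, map_mul, map_pow]
      ring
    · refine mul_ne_zero (mul_ne_zero (by norm_num [Complex.I_ne_zero]) (pow_ne_zero _ hh0)) ?_
      simpa using hm0
    · exact (continuous_const.mul ((h.continuous).pow 2)).mul
        (continuous_star.comp m.continuous)
  have hQ0abs : 0 < ‖Q 0‖ := by simpa using hQ0
  -- δ₁ : Q ≠ 0 on ball
  obtain ⟨δ₁, hδ₁pos, hδ₁⟩ := Metric.continuousAt_iff.mp hQcont.continuousAt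
    (‖Q 0‖) hQ0abs
  have hQne : ∀ z : ℂ, ‖z‖ < δ₁ → Q z ≠ 0 := by
    intro z hz hQz
    have hdz : dist z (0 : ℂ) < δ₁ := by rw [Complex.dist_eq, sub_zero]; exact hz
    have := hδ₁ hdz
    rw [hQz, dist_comm, Complex.dist_eq, sub_zero] at this
    exact absurd this (lt_irrefl _)
  -- V = normalized Q, δ₂ : V stays within 1 of V 0
  set V : ℂ → ℂ := fun z => Q z / (‖Q z‖ : ℂ) with hVdef
  have hVabs : ∀ z : ℂ, Q z ≠ 0 → ‖V z‖ = 1 := by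
    intro z hz
    have : ‖Q z‖ ≠ 0 := by simpa using hz
    simp [hVdef, norm_div, Complex.norm_real, _root_.abs_of_nonneg (norm_nonneg _),
      div_self this]
  have hVcont0 : ContinuousAt V 0 := by
    apply ContinuousAt.div hQcont.continuousAt
      (Complex.continuous_ofReal.comp (continuous_norm.comp hQcont)).continuousAt
    simpa using hQ0
  obtain ⟨δ₂, hδ₂pos, hδ₂⟩ := Metric.continuousAt_iff.mp hVcont0 1 one_pos
  refine ⟨min δ₁ δ₂, lt_min hδ₁pos hδ₂pos, ?_, ?_⟩
  · intro z hz hzlt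
    rw [hQfact]
    refine mul_ne_zero (mul_ne_zero (pow_ne_zero _ hz) (pow_ne_zero _ (by simpa using hz))) ?_
    exact hQne z (lt_of_lt_of_le hzlt (min_le_left _ _))
  · intro ε hε hεlt
    set u₀ : ℂ := V 0 with hu₀
    have hu₀ne : u₀ ≠ 0 := by
      rw [hu₀]
      intro hcon
      have := hVabs 0 hQ0
      rw [hcon] at this
      simpa using this
    -- facts on the circle
    have hzabs : ∀ s : ℝ, ‖circleMap 0 ε s‖ = ε := by
      intro s; rw [norm_circleMap_zero, abs_of_pos hε]
    have hQz : ∀ s : ℝ, Q (circleMap 0 ε s) ≠ 0 := by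
      intro s
      exact hQne _ (by rw [hzabs]; exact lt_of_lt_of_le hεlt (min_le_left _ _))
    have hWslit : ∀ s : ℝ, 0 < (V (circleMap 0 ε s) / u₀).re := by
      intro s
      apply re_pos_of_abs_sub_one_lt
      have hd : dist (V (circleMap 0 ε s)) u₀ < 1 := by
        have hdz : dist (circleMap 0 ε s) (0 : ℂ) < δ₂ := by
          rw [Complex.dist_eq, sub_zero, hzabs]
          exact lt_of_lt_of_le hεlt (min_le_right _ _)
        exact hδ₂ hdz
      have habs1 : ‖u₀‖ = 1 := hVabs 0 hQ0
      calc ‖V (circleMap 0 ε s) / u₀ - 1‖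
          = ‖(V (circleMap 0 ε s) - u₀) / u₀‖ := by
            rw [sub_div, div_self hu₀ne]
        _ = ‖V (circleMap 0 ε s) - u₀‖ := by
            rw [norm_div, habs1, div_one]
        _ < 1 := by rwa [Complex.dist_eq] at hd
    set θ : ℝ → ℝ := fun s =>
      ((j : ℝ) + 2) * s + u₀.arg + (V (circleMap 0 ε s) / u₀).arg with hθ
    have hWcont : Continuous fun s : ℝ => V (circleMap 0 ε s) / u₀ := by
      apply Continuous.div_const
      apply Continuous.div (hQcont.comp (continuous_circleMap 0 ε))
        (Complex.continuous_ofReal.comp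
          (continuous_norm.comp (hQcont.comp (continuous_circleMap 0 ε))))
      intro s
      simpa using hQz s
    have hθcont : Continuous θ := by
      refine ((continuous_const.mul continuous_id).add continuous_const).add ?_
      rw [continuous_iff_continuousAt]
      intro s
      exact ContinuousAt.comp (g := Complex.arg)
        (f := fun s : ℝ => V (circleMap 0 ε s) / u₀)
        (Complex.continuousAt_arg (Or.inl (hWslit s))) hWcont.continuousAt
    refine ⟨θ, hθcont, ?_, ?_⟩
    · intro s
      set z : ℂ := circleMap 0 ε s with hzdef
      have hzeq : z = (ε : ℂ) * Complex.exp ((s : ℂ) * Complex.I) := by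
        simp [hzdef, circleMap]
      have hconj : (starRingEnd ℂ) z = (ε : ℂ) * Complex.exp (-((s : ℂ) * Complex.I)) := by
        rw [hzeq, map_mul, Complex.conj_ofReal, ← Complex.exp_conj, map_mul,
          Complex.conj_ofReal, Complex.conj_I, mul_neg]
      have hG0eq : G0 f z = (ε : ℂ) ^ (3 * j + 2)
          * Complex.exp ((((j : ℕ) : ℂ) + 2) * ((s : ℂ) * Complex.I)) * Q z := by
        rw [hQfact z, hconj, hzeq]
        rw [mul_pow, mul_pow, ← Complex.exp_nat_mul, ← Complex.exp_nat_mul]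
        rw [show ((2 * j + 2 : ℕ) : ℂ) * ((s : ℂ) * Complex.I)
              = (((j : ℕ) : ℂ) + 2) * ((s : ℂ) * Complex.I)
                + ((j : ℕ) : ℂ) * ((s : ℂ) * Complex.I) by push_cast; ring,
            show ((j : ℕ) : ℂ) * -((s : ℂ) * Complex.I)
              = -(((j : ℕ) : ℂ) * ((s : ℂ) * Complex.I)) by ring,
            Complex.exp_add, Complex.exp_neg]
        have hexpne : Complex.exp (((j : ℕ) : ℂ) * ((s : ℂ) * Complex.I)) ≠ 0 :=
          Complex.exp_ne_zero _
        field_simp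
        ring
      have habsG0 : (‖G0 f z‖ : ℂ) = (ε : ℂ) ^ (3 * j + 2) * (‖Q z‖ : ℂ) := by
        rw [hG0eq]
        rw [norm_mul, norm_mul, norm_pow, Complex.norm_real, Real.norm_eq_abs, abs_of_pos hε,
          Complex.norm_exp]
        have : ((((j : ℕ) : ℂ) + 2) * ((s : ℂ) * Complex.I)).re = 0 := by
          simp [Complex.mul_re, Complex.mul_im]
        rw [this, Real.exp_zero]
        push_cast
        ring
      have hεpow_ne : ((ε : ℂ)) ^ (3 * j + 2) ≠ 0 :=
        pow_ne_zero _ (by exact_mod_cast hε.ne')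
      have hQabs_ne : (‖Q z‖ : ℂ) ≠ 0 := by simpa using hQz s
      have hmain : G0 f z / (‖G0 f z‖ : ℂ)
          = Complex.exp ((((j : ℕ) : ℂ) + 2) * ((s : ℂ) * Complex.I)) * V z := by
        rw [habsG0, hG0eq, hVdef]
        field_simp
      -- unimodular pieces
      have hu0exp : Complex.exp (↑u₀.arg * Complex.I) = u₀ := by
        have := Complex.norm_mul_exp_arg_mul_I u₀
        rwa [hVabs 0 hQ0, Complex.ofReal_one, one_mul] at this
      have hwexp : Complex.exp (↑(V z / u₀).arg * Complex.I) = V z / u₀ := by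
        have := Complex.norm_mul_exp_arg_mul_I (V z / u₀)
        have habsw : ‖V z / u₀‖ = 1 := by
          rw [norm_div, hVabs z (hQz s), hVabs 0 hQ0, div_one]
        rwa [habsw, Complex.ofReal_one, one_mul] at this
      have hVsplit : V z = u₀ * (V z / u₀) := by rw [mul_comm, div_mul_cancel₀ _ hu₀ne]
      calc G0 f z / (‖G0 f z‖ : ℂ)
          = Complex.exp ((((j : ℕ) : ℂ) + 2) * ((s : ℂ) * Complex.I)) * V z := hmain
        _ = Complex.exp ((((j : ℕ) : ℂ) + 2) * ((s : ℂ) * Complex.I))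
            * (Complex.exp (↑u₀.arg * Complex.I) * Complex.exp (↑(V z / u₀).arg * Complex.I)) := by
            rw [hu0exp, hwexp, ← hVsplit]
        _ = Complex.exp (Complex.I * (θ s : ℝ)) := by
            rw [← Complex.exp_add, ← Complex.exp_add]
            congr 1
            simp only [hθ]
            push_cast
            ring
    · have hper : circleMap 0 ε (2 * π) = circleMap 0 ε 0 := by
        have := periodic_circleMap 0 ε 0
        rwa [zero_add] at this
      simp only [hθ, hper]
      push_cast
      ring

end
end

section
/- Let f : ℂ → ℂ be a complex polynomial with f(0) = 0 of multiplicity k ≥ 2 at the origin, so f(z) = c z^k + (higher order terms) with c ≠ 0. Then for the mixed polynomial G₀(z) = −2i(f'(z))²conj(f''(z)), in a sufficiently small punctured neighborhood of 0 the equality |2 f''(z)|f'(z)|²|f''(z)|² − f'(z)f'''(z)|f'(z)|²conj(f''(z))| = |f'(z)f''(z)|f'(z)|²conj(f'''(z)) − (f'(z))²|f''(z)|²conj(f''(z))| fails, i.e., there exists ε > 0 such that no z with 0 < |z| < ε satisfies this equation. -/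
open Complex

noncomputable section

def d1 (f : Polynomial ℂ) (z : ℂ) : ℂ := f.derivative.eval z
def d2 (f : Polynomial ℂ) (z : ℂ) : ℂ := f.derivative.derivative.eval z
def d3 (f : Polynomial ℂ) (z : ℂ) : ℂ := f.derivative.derivative.derivative.eval z

open Polynomial in
lemma deriv_Xpow_mul (n : ℕ) (p : ℂ[X]) :
    derivative (X ^ (n+1) * p) = X ^ n * (C ((n+1 : ℕ) : ℂ) * p + X * derivative p) := by
  rw [derivative_mul, derivative_X_pow]
  simp only [Nat.add_sub_cancel]
  ring

open Polynomial in
lemma X_mul_deriv_Xpow_mul (n : ℕ) (p : ℂ[X]) :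
    X * derivative (X ^ n * p) = X ^ n * (C ((n : ℕ) : ℂ) * p + X * derivative p) := by
  cases n with
  | zero => simp
  | succ j => rw [deriv_Xpow_mul]; ring

lemma habs2 (w : ℂ) : ((‖w‖ : ℂ))^2 = w * (starRingEnd ℂ) w := by
  calc ((‖w‖ : ℂ))^2 = ((‖w‖ ^ 2 : ℝ) : ℂ) := by push_cast; ring
  _ = (Complex.normSq w : ℂ) := by rw [Complex.sq_norm]
  _ = w * (starRingEnd ℂ) w := (Complex.mul_conj w).symm

theorem critical_equation_fails_near_origin (f : Polynomial ℂ) (hf : f ≠ 0) (k : ℕ)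
    (hk : 2 ≤ k) (h0 : f.eval 0 = 0) (hmult : f.rootMultiplicity 0 = k) :
    ∃ ε : ℝ, 0 < ε ∧ ∀ z : ℂ, 0 < ‖z‖ → ‖z‖ < ε →
      ‖2 * d2 f z * (‖d1 f z‖ : ℂ) ^ 2 *
            (‖d2 f z‖ : ℂ) ^ 2 -
          d1 f z * d3 f z * (‖d1 f z‖ : ℂ) ^ 2 * (starRingEnd ℂ) (d2 f z)‖ ≠
        ‖d1 f z * d2 f z * (‖d1 f z‖ : ℂ) ^ 2 *
            (starRingEnd ℂ) (d3 f z) -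
          (d1 f z) ^ 2 * (‖d2 f z‖ : ℂ) ^ 2 * (starRingEnd ℂ) (d2 f z)‖ := by
  obtain ⟨m, rfl⟩ : ∃ m, k = m + 2 := ⟨k - 2, by omega⟩
  classical
  have key := Polynomial.pow_mul_divByMonic_rootMultiplicity_eq f 0
  have hbne : (f /ₘ (Polynomial.X - Polynomial.C 0) ^ (Polynomial.rootMultiplicity 0 f)).eval 0 ≠ 0 :=
    Polynomial.eval_divByMonic_pow_rootMultiplicity_ne_zero 0 hf
  rw [map_zero, sub_zero, hmult] at key hbne
  set g := f /ₘ Polynomial.X ^ (m+2) with hg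
  set q1 := Polynomial.C ((m+2 : ℕ) : ℂ) * g + Polynomial.X * Polynomial.derivative g with hq1
  set q2 := Polynomial.C ((m+1 : ℕ) : ℂ) * q1 + Polynomial.X * Polynomial.derivative q1 with hq2
  set q3 := Polynomial.C ((m : ℕ) : ℂ) * q2 + Polynomial.X * Polynomial.derivative q2 with hq3
  have hd1 : f.derivative = Polynomial.X ^ (m+1) * q1 := by
    rw [← key]; exact deriv_Xpow_mul (m+1) g
  have hd2 : f.derivative.derivative = Polynomial.X ^ m * q2 := by
    rw [hd1]; exact deriv_Xpow_mul m q1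
  have hd3 : Polynomial.X * f.derivative.derivative.derivative = Polynomial.X ^ m * q3 := by
    rw [hd2]; exact X_mul_deriv_Xpow_mul m q2
  -- evaluations at 0
  have e1 : q1.eval 0 = ((m+2 : ℕ) : ℂ) * g.eval 0 := by simp [hq1]
  have e1ne : q1.eval 0 ≠ 0 := by
    rw [e1]; exact mul_ne_zero (by exact_mod_cast Nat.succ_ne_zero (m+1)) hbne
  have e2 : q2.eval 0 = ((m+1 : ℕ) : ℂ) * q1.eval 0 := by simp [hq2]
  have e3 : q3.eval 0 = ((m : ℕ) : ℂ) * q2.eval 0 := by simp [hq3]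
  -- the H functions
  set H1 : ℂ → ℂ := fun z => 2 * q1.eval z * (starRingEnd ℂ) (q1.eval z) * (q2.eval z)^2 *
      (starRingEnd ℂ) (q2.eval z) -
      (q1.eval z)^2 * (starRingEnd ℂ) (q1.eval z) * q3.eval z * (starRingEnd ℂ) (q2.eval z) with hH1
  set H2 : ℂ → ℂ := fun z => (q1.eval z)^2 * (starRingEnd ℂ) (q1.eval z) * q2.eval z *
      (starRingEnd ℂ) (q3.eval z) -
      (q1.eval z)^2 * q2.eval z * ((starRingEnd ℂ) (q2.eval z))^2 with hH2
  have hc1 : Continuous fun z : ℂ => q1.eval z := q1.continuous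
  have hc2 : Continuous fun z : ℂ => q2.eval z := q2.continuous
  have hc3 : Continuous fun z : ℂ => q3.eval z := q3.continuous
  have hc1' : Continuous fun z : ℂ => (starRingEnd ℂ) (q1.eval z) := hc1.star
  have hc2' : Continuous fun z : ℂ => (starRingEnd ℂ) (q2.eval z) := hc2.star
  have hc3' : Continuous fun z : ℂ => (starRingEnd ℂ) (q3.eval z) := hc3.star
  have hcont1 : Continuous H1 := by
    rw [hH1]
    exact ((((continuous_const.mul hc1).mul hc1').mul (hc2.pow 2)).mul hc2').sub
      ((((hc1.pow 2).mul hc1').mul hc3).mul hc2')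
  have hcont2 : Continuous H2 := by
    rw [hH2]
    exact ((((hc1.pow 2).mul hc1').mul hc2).mul hc3').sub
      (((hc1.pow 2).mul hc2).mul (hc2'.pow 2))
  -- values at 0
  obtain ⟨a, ha⟩ : ∃ a, q1.eval 0 = a := ⟨_, rfl⟩
  rw [ha] at e2 e1ne
  have e3' : q3.eval 0 = ((m : ℕ) : ℂ) * (((m+1 : ℕ) : ℂ) * a) := by rw [e3, e2]
  have hv1 : H1 0 = (((m+1)^2*(m+2) : ℕ) : ℂ) * (a^3 * ((starRingEnd ℂ) a)^2) := by
    simp only [hH1, ha, e2, e3', map_mul, map_natCast]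
    push_cast
    ring
  have hv2 : H2 0 = -((((m+1)^2 : ℕ)) : ℂ) * (a^3 * ((starRingEnd ℂ) a)^2) := by
    simp only [hH2, ha, e2, e3', map_mul, map_natCast]
    push_cast
    ring
  have htpos : 0 < ‖a^3 * ((starRingEnd ℂ) a)^2‖ :=
    norm_pos_iff.mpr (mul_ne_zero (pow_ne_zero _ e1ne) (pow_ne_zero _ (by simpa using e1ne)))
  have hlt0 : ‖H2 0‖ < ‖H1 0‖ := by
    rw [hv1, hv2]
    simp only [norm_mul, norm_neg, Complex.norm_natCast]
    have ht : 0 < ‖a^3‖ * ‖(starRingEnd ℂ) a ^ 2‖ := by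
      rw [← norm_mul]; exact htpos
    have h1 : ((((m+1)^2 : ℕ)) : ℝ) < (((m+1)^2*(m+2) : ℕ) : ℝ) := by
      push_cast; nlinarith
    nlinarith [mul_pos (sub_pos.mpr h1) ht, ht, h1]
  -- get the neighborhood
  have hev : ∀ᶠ z in nhds (0:ℂ), ‖H2 z‖ < ‖H1 z‖ :=
    ContinuousAt.eventually_lt (continuous_norm.comp hcont2).continuousAt
      (continuous_norm.comp hcont1).continuousAt hlt0
  rw [Metric.eventually_nhds_iff] at hev
  obtain ⟨ε, hεpos, hball⟩ := hev
  refine ⟨ε, hεpos, ?_⟩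
  intro z hz0 hzε
  have hzne : z ≠ 0 := by
    intro h; rw [h] at hz0; simp at hz0
  have hH : ‖H2 z‖ < ‖H1 z‖ := by
    apply hball; rwa [Complex.dist_eq, sub_zero]
  have hA : d1 f z = z^(m+1) * q1.eval z := by
    rw [d1, hd1]; simp only [Polynomial.eval_mul, Polynomial.eval_pow, Polynomial.eval_X]
  have hB : d2 f z = z^m * q2.eval z := by
    rw [d2, hd2]; simp only [Polynomial.eval_mul, Polynomial.eval_pow, Polynomial.eval_X]
  have hCz : z * d3 f z = z^m * q3.eval z := by
    rw [d3]
    have := congrArg (Polynomial.eval z) hd3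
    simpa only [Polynomial.eval_mul, Polynomial.eval_pow, Polynomial.eval_X] using this
  have hD3 : d3 f z = z^m * q3.eval z / z := by
    field_simp
    linear_combination hCz
  have key1 : z * (2 * d2 f z * (‖d1 f z‖ : ℂ) ^ 2 *
        (‖d2 f z‖ : ℂ) ^ 2 -
        d1 f z * d3 f z * (‖d1 f z‖ : ℂ) ^ 2 * (starRingEnd ℂ) (d2 f z))
      = z^(3*m+2) * ((starRingEnd ℂ) z)^(2*m+1) * H1 z := by
    simp only [hH1]
    rw [habs2, habs2, hA, hB, hD3]
    simp only [map_mul, map_pow, map_div₀]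
    field_simp
    ring
  have key2 : (starRingEnd ℂ) z * (d1 f z * d2 f z * (‖d1 f z‖ : ℂ) ^ 2 *
        (starRingEnd ℂ) (d3 f z) -
        (d1 f z) ^ 2 * (‖d2 f z‖ : ℂ) ^ 2 * (starRingEnd ℂ) (d2 f z))
      = z^(3*m+2) * ((starRingEnd ℂ) z)^(2*m+1) * H2 z := by
    simp only [hH2]
    rw [habs2, habs2, hA, hB, hD3]
    simp only [map_mul, map_pow, map_div₀]
    have hzcne : (starRingEnd ℂ) z ≠ 0 := by simpa using hzne
    field_simp
    ring
  intro heq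
  have hq : ‖z^(3*m+2) * ((starRingEnd ℂ) z)^(2*m+1) * H1 z‖
      = ‖z^(3*m+2) * ((starRingEnd ℂ) z)^(2*m+1) * H2 z‖ := by
    rw [← key1, ← key2, norm_mul, norm_mul, heq, Complex.norm_conj]
  rw [norm_mul, norm_mul, norm_mul, norm_mul] at hq
  have hfac : 0 < ‖z^(3*m+2)‖ * ‖((starRingEnd ℂ) z)^(2*m+1)‖ := by
    apply mul_pos <;> · apply norm_pos_iff.mpr; simp [hzne]
  have : ‖H1 z‖ = ‖H2 z‖ :=
    mul_left_cancel₀ (ne_of_gt hfac) (by rw [mul_assoc, mul_assoc] at hq; linarith [hq])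
  linarith [hH, this]

end
end
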